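/- Let G be a finite simple graph, let d ≥ 1 and t ≥ 1 be integers, and let H(G,d,t) be the associated constructed hypergraph. Then the maximum cardinality mmhs of a minimal hitting set of H(G,d,t) satisfies t·C(α(G),d) ≤ mmhs ≤ t·C(α(G),d) + |V(G)|, where α(G) is the maximum size of an independent set of G and C(α(G),d) denotes the binomial coefficient. -/
import Mathlib


/-- `F` is a hitting set of the hypergraph with hyperedge family `E'`:
it intersects every hyperedge. -/
def HittingSet {W : Type*} (E' : Set (Set W)) (F : Set W) : Prop :=
  ∀ e ∈ E', (F ∩ e).Nonempty

/-- `F` is a minimal hitting set: it is a hitting set and no proper subset of it is. -/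
def MinimalHittingSet {W : Type*} (E' : Set (Set W)) (F : Set W) : Prop :=
  HittingSet E' F ∧ ∀ F' : Set W, F' ⊂ F → ¬ HittingSet E' F'

/-- `I` is an independent set of `G` (as a `Finset`): no two of its vertices are adjacent. -/
def FinIndep {V : Type*} (G : SimpleGraph V) (I : Finset V) : Prop :=
  ∀ u ∈ I, ∀ v ∈ I, ¬ G.Adj u v

/-- The vertex set of the hypergraph `H(G,d,t)`: the vertices of `G` together with the
pairs `(S, a)` where `S ⊆ V(G)` has `|S| = d` and `1 ≤ a ≤ t`. -/
abbrev HVert (V : Type*) (d t : ℕ) : Type _ :=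
  V ⊕ ({S : Finset V // S.card = d} × Fin t)

/-- The hyperedges of `H(G,d,t)`: the set `{u, v}` for every edge `uv` of `G`, and the
set `S ∪ {(S, a)}` for every `d`-element subset `S` of `V(G)` and every `1 ≤ a ≤ t`. -/
def hEdges {V : Type*} (G : SimpleGraph V) (d t : ℕ) : Set (Set (HVert V d t)) :=
  {e | (∃ u v : V, G.Adj u v ∧ e = {Sum.inl u, Sum.inl v}) ∨
       (∃ (S : {S : Finset V // S.card = d}) (a : Fin t),
          e = Sum.inl '' (↑S.1 : Set V) ∪ {Sum.inr (S, a)})}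

lemma countPairs {V : Type*} [Fintype V] [DecidableEq V] (d t : ℕ) (I : Finset V) :
    (Finset.univ.filter (fun p : {S : Finset V // S.card = d} × Fin t => p.1.1 ⊆ I)).card
      = t * I.card.choose d := by
  have h : (Finset.univ.filter (fun p : {S : Finset V // S.card = d} × Fin t => p.1.1 ⊆ I)).card
      = ((I.powersetCard d) ×ˢ (Finset.univ : Finset (Fin t))).card := by
    apply Finset.card_bij' (fun p _ => (p.1.1, p.2))
      (fun q hq => (⟨q.1, (Finset.mem_powersetCard.mp (Finset.mem_product.mp hq).1).2⟩, q.2))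
    · intro p hp; rfl
    · intro q hq; rfl
    · intro p hp
      simp only [Finset.mem_filter] at hp
      simp [Finset.mem_product, Finset.mem_powersetCard, hp.2, p.1.2]
    · intro q hq
      simp only [Finset.mem_product, Finset.mem_powersetCard] at hq
      simp [hq.1.1]
  rw [h, Finset.card_product, Finset.card_powersetCard, Finset.card_univ, Fintype.card_fin,
    mul_comm]

theorem stmt15 {V : Type*} [Fintype V] [DecidableEq V] (G : SimpleGraph V)
    (d t : ℕ) (hd : 1 ≤ d) (ht : 1 ≤ t)
    (α : ℕ) (hα₁ : ∃ I : Finset V, FinIndep G I ∧ I.card = α)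
    (hα₂ : ∀ I : Finset V, FinIndep G I → I.card ≤ α)
    (mmhs : ℕ)
    (hm₁ : ∃ F : Set (HVert V d t), MinimalHittingSet (hEdges G d t) F ∧ F.ncard = mmhs)
    (hm₂ : ∀ F : Set (HVert V d t), MinimalHittingSet (hEdges G d t) F → F.ncard ≤ mmhs) :
    t * α.choose d ≤ mmhs ∧ mmhs ≤ t * α.choose d + Fintype.card V := by
  classical
  constructor
  · -- lower bound
    obtain ⟨I, hI, hIcard⟩ := hα₁
    have hmax : ∀ v ∉ I, ∃ w ∈ I, G.Adj v w := by
      intro v hv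
      by_contra h
      push_neg at h
      have hind : FinIndep G (insert v I) := by
        intro u hu w hw
        rcases Finset.mem_insert.mp hu with rfl | hu'
        · rcases Finset.mem_insert.mp hw with rfl | hw'
          · exact G.irrefl
          · exact h w hw'
        · rcases Finset.mem_insert.mp hw with rfl | hw'
          · intro ha; exact h u hu' ha.symm
          · exact hI u hu' w hw'
      have := hα₂ _ hind
      rw [Finset.card_insert_of_notMem hv, hIcard] at this
      omega
    set Fs : Finset (HVert V d t) :=
      Iᶜ.disjSum (Finset.univ.filter fun p : {S : Finset V // S.card = d} × Fin t => p.1.1 ⊆ I)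
      with hFs
    have hmemL : ∀ v : V, Sum.inl v ∈ Fs ↔ v ∉ I := by
      intro v; simp [hFs]
    have hmemR : ∀ p, Sum.inr p ∈ Fs ↔ p.1.1 ⊆ I := by
      intro p; simp [hFs]
    have hhit : HittingSet (hEdges G d t) (↑Fs : Set (HVert V d t)) := by
      rintro e (⟨u, v, huv, rfl⟩ | ⟨S, a, rfl⟩)
      · by_cases hu : u ∈ I
        · have hv : v ∉ I := fun hv => hI u hu v hv huv
          exact ⟨Sum.inl v, by simp [(hmemL v).mpr hv]⟩
        · exact ⟨Sum.inl u, by simp [(hmemL u).mpr hu]⟩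
      · by_cases hS : S.1 ⊆ I
        · exact ⟨Sum.inr (S, a), by simp [(hmemR (S, a)).mpr hS]⟩
        · obtain ⟨u, hu, hu'⟩ := Finset.not_subset.mp hS
          exact ⟨Sum.inl u, by simp [(hmemL u).mpr hu', hu]⟩
    have hmin : MinimalHittingSet (hEdges G d t) (↑Fs : Set (HVert V d t)) := by
      refine ⟨hhit, ?_⟩
      intro F' hss hF'
      obtain ⟨x, hxF, hxF'⟩ := Set.exists_of_ssubset hss
      have hsub := hss.subset
      match x with
      | Sum.inl v =>
        have hv : v ∉ I := (hmemL v).mp hxF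
        obtain ⟨w, hw, hadj⟩ := hmax v hv
        obtain ⟨y, hyF', hye⟩ := hF' {Sum.inl v, Sum.inl w} (Or.inl ⟨v, w, hadj, rfl⟩)
        rcases hye with rfl | rfl
        · exact hxF' hyF'
        · exact ((hmemL w).mp (hsub hyF')) hw
      | Sum.inr (S, a) =>
        have hS : S.1 ⊆ I := (hmemR (S, a)).mp hxF
        obtain ⟨y, hyF', hye⟩ := hF' (Sum.inl '' (↑S.1 : Set V) ∪ {Sum.inr (S, a)})
          (Or.inr ⟨S, a, rfl⟩)
        rcases hye with ⟨u, hu, rfl⟩ | rfl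
        · exact ((hmemL u).mp (hsub hyF')) (hS hu)
        · exact hxF' hyF'
    have hcard := hm₂ _ hmin
    rw [Set.ncard_coe_finset] at hcard
    calc t * α.choose d = (Finset.univ.filter
          (fun p : {S : Finset V // S.card = d} × Fin t => p.1.1 ⊆ I)).card := by
            rw [countPairs, hIcard]
      _ ≤ Fs.card := by rw [hFs, Finset.card_disjSum]; omega
      _ ≤ mmhs := hcard
  · -- upper bound
    obtain ⟨F, ⟨hFhit, hFmin⟩, hFcard⟩ := hm₁
    set C : Finset V := Finset.univ.filter (fun v => Sum.inl v ∉ F) with hC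
    have hCind : FinIndep G C := by
      intro u hu v hv hadj
      obtain ⟨y, hyF, hye⟩ := hFhit {Sum.inl u, Sum.inl v} (Or.inl ⟨u, v, hadj, rfl⟩)
      simp only [hC, Finset.mem_filter] at hu hv
      rcases hye with rfl | rfl
      · exact hu.2 hyF
      · exact hv.2 hyF
    have hCcard : C.card ≤ α := hα₂ _ hCind
    have hgad : ∀ (S : {S : Finset V // S.card = d}) (a : Fin t),
        Sum.inr (S, a) ∈ F → S.1 ⊆ C := by
      intro S a hSF u hu
      simp only [hC, Finset.mem_filter, Finset.mem_univ, true_and]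
      intro huF
      apply hFmin (F \ {Sum.inr (S, a)})
      · exact Set.sdiff_singleton_ssubset.mpr hSF
      · rintro e (⟨u', v', huv', rfl⟩ | ⟨S', a', rfl⟩)
        · obtain ⟨y, hyF, hye⟩ := hFhit _ (Or.inl ⟨u', v', huv', rfl⟩)
          refine ⟨y, ⟨hyF, ?_⟩, hye⟩
          rcases hye with rfl | rfl <;> simp
        · by_cases hsa : (S', a') = (S, a)
          · refine ⟨Sum.inl u, ⟨huF, by simp⟩, ?_⟩
            left
            exact ⟨u, by rw [show S' = S from congrArg Prod.fst hsa]; exact hu, rfl⟩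
          · obtain ⟨y, hyF, hye⟩ := hFhit _ (Or.inr ⟨S', a', rfl⟩)
            refine ⟨y, ⟨hyF, ?_⟩, hye⟩
            rcases hye with ⟨u', hu', rfl⟩ | rfl
            · simp
            · simp [hsa]
    set T : Finset (HVert V d t) :=
      Finset.univ.disjSum (Finset.univ.filter fun p : {S : Finset V // S.card = d} × Fin t =>
        p.1.1 ⊆ C) with hT
    have hFT : F ⊆ ↑T := by
      rintro (v | ⟨S, a⟩) hx
      · simp [hT]
      · simp only [Finset.mem_coe, hT, Finset.inr_mem_disjSum, Finset.mem_filter,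
          Finset.mem_univ, true_and]
        exact hgad S a hx
    have hFle : F.ncard ≤ T.card := by
      calc F.ncard ≤ (↑T : Set (HVert V d t)).ncard := Set.ncard_le_ncard hFT T.finite_toSet
        _ = T.card := Set.ncard_coe_finset T
    rw [hFcard] at hFle
    have hTcard : T.card = Fintype.card V + t * C.card.choose d := by
      rw [hT, Finset.card_disjSum, Finset.card_univ, countPairs]
    have : t * C.card.choose d ≤ t * α.choose d :=
      Nat.mul_le_mul_left t (Nat.choose_le_choose d hCcard)
    omega
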